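/- arXiv:1010.3424 — 3 statements merged into one kernel-verified Lean document; each statement's English description precedes it below -/
import Mathlib

section
/- Let T₁, …, Tₘ be colored graphs, each with at least one edge, let E be the maximum number of edges among the Tᵢ, and let r > 0. Set M = 2mEr. If α, β ∈ ℕᵐ are nonzero lattice vectors with ‖β‖ ≥ M‖α‖ and ‖α/‖α‖ − β/‖β‖‖ ≤ 1/M, then the disjoint union β·T (taking βᵢ copies of Tᵢ) is r-isomorphic to an integer multiple of α·T (i.e., to (tα)·T for some positive integer t). -/
open Filter Topology

/-- A finite colored (edge-labeled) directed graph with labels in `L`. -/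
structure CGraph (L : Type) where
  n : ℕ
  edges : Finset (Fin n × Fin n × L)

namespace CGraph

variable {L : Type} [DecidableEq L]

/-- Map an edge along a vertex map. -/
def mapEdge {n m : ℕ} (f : Fin n → Fin m) (e : Fin n × Fin n × L) : Fin m × Fin m × L :=
  (f e.1, f e.2.1, e.2.2)

/-- The vertices appearing in an edge set. -/
def supp {n : ℕ} (E : Finset (Fin n × Fin n × L)) : Finset (Fin n) :=
  E.image (·.1) ∪ E.image (·.2.1)

/-- `f`, `EA` witness an `r`-isomorphism between `A` and `B`: `EA` is a subgraph of `A`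
containing at least a `(1 - 1/r)`-fraction of the edges of `A`, whose image under the
(injective-on-`EA`) vertex map `f` is a subgraph of `B` containing at least a
`(1 - 1/r)`-fraction of the edges of `B`. -/
def IsRIsoWitness (r : ℕ) (A B : CGraph L) (f : Fin A.n → Fin B.n)
    (EA : Finset (Fin A.n × Fin A.n × L)) : Prop :=
  EA ⊆ A.edges ∧ Set.InjOn f (supp EA) ∧
    EA.image (mapEdge f) ⊆ B.edges ∧
    ((1 : ℝ) - 1 / r) * A.edges.card ≤ EA.card ∧
    ((1 : ℝ) - 1 / r) * B.edges.card ≤ EA.card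

/-- `A` and `B` are `r`-isomorphic colored graphs. -/
def RIso (r : ℕ) (A B : CGraph L) : Prop :=
  ∃ f EA, IsRIsoWitness r A B f EA

/-- Disjoint union of colored graphs. -/
def disjUnion (A B : CGraph L) : CGraph L :=
  ⟨A.n + B.n,
    (A.edges.image (mapEdge (Fin.castAdd B.n))) ∪ (B.edges.image (mapEdge (Fin.natAdd A.n)))⟩

/-- Disjoint union of `k` copies of `A`. -/
def nsmul : ℕ → CGraph L → CGraph L
  | 0, _ => ⟨0, ∅⟩
  | k + 1, A => disjUnion A (nsmul k A)

/-- The linear combination `α · T`: disjoint union of `α i` copies of `T i`. -/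
def lincomb {m : ℕ} (α : Fin m → ℕ) (T : Fin m → CGraph L) : CGraph L :=
  (List.finRange m).foldr (fun i B => disjUnion (nsmul (α i) (T i)) B) ⟨0, ∅⟩

/-- Restriction of a colored graph to the edges whose color lies in `Z`. -/
def restrict (A : CGraph L) (Z : Finset L) : CGraph L :=
  ⟨A.n, A.edges.filter (fun e => e.2.2 ∈ Z)⟩

variable {Γ : Type*} [Group Γ]

/-- The ball of radius `r` around `1` in the Cayley graph of `Γ` with respect to the
generators `lab '' S`. -/
def ball (lab : L → Γ) (S : Finset L) (r : ℕ) : Set Γ :=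
  {γ | ∃ w : List L, (∀ x ∈ w, x ∈ S) ∧ w.length ≤ r ∧ (w.map lab).prod = γ}

/-- The vertex `p` of `G` has an `r`-neighborhood isomorphic, as a rooted edge-labeled
graph, to the `r`-ball of the Cayley graph of `Γ` with generators `lab '' S`. -/
def GoodVertex (lab : L → Γ) (S : Finset L) (G : CGraph L) (r : ℕ) (p : Fin G.n) : Prop :=
  ∃ f : Γ → Fin G.n, f 1 = p ∧ Set.InjOn f (ball lab S r) ∧
    ∀ γ ∈ ball lab S r, ∀ δ ∈ ball lab S r, ∀ c : L,
      ((f γ, f δ, c) ∈ G.edges ↔ (c ∈ S ∧ δ = γ * lab c))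

/-- `G` is an `r`-approximation of the Cayley graph of `Γ` with generators `lab '' S`. -/
def IsApprox (lab : L → Γ) (S : Finset L) (G : CGraph L) (r : ℕ) : Prop :=
  ((1 : ℝ) - 1 / r) * G.n < {p : Fin G.n | GoodVertex lab S G r p}.ncard

/-- A sofic approximation: for each `r`, eventually all graphs are `r`-approximations. -/
def SoficApprox (lab : L → Γ) (S : Finset L) (G : ℕ → CGraph L) : Prop :=
  ∀ r : ℕ, ∀ᶠ n in atTop, IsApprox lab S (G n) r

/-- Two vertices are adjacent with respect to an edge set (ignoring colors/orientation). -/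
def adjRel {n : ℕ} (E : Finset (Fin n × Fin n × L)) (a b : Fin n) : Prop :=
  ∃ c, (a, b, c) ∈ E ∨ (b, a, c) ∈ E

/-- The connected component of `v` with respect to an edge set. -/
def component {n : ℕ} (E : Finset (Fin n × Fin n × L)) (v : Fin n) : Set (Fin n) :=
  {w | Relation.ReflTransGen (adjRel E) v w}

/-- A sequence of finite colored graphs is hyperfinite if for every `ε > 0` there is `K`
such that from each `G n` one can erase at most `ε |E(G n)|` edges so that all components
of the remaining graph have at most `K` vertices. -/
def Hyperfinite (G : ℕ → CGraph L) : Prop :=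
  ∀ ε : ℝ, 0 < ε → ∃ K : ℕ, ∀ n, ∃ F ⊆ (G n).edges,
    (F.card : ℝ) ≤ ε * (G n).edges.card ∧
    ∀ v, (component ((G n).edges \ F) v).ncard ≤ K

end CGraph

/-- The normalized Hamming rank of a permutation of `Fin n`. -/
noncomputable def rk {n : ℕ} (g : Equiv.Perm (Fin n)) : ℝ :=
  1 - (Finset.univ.filter fun x => g x = x).card / n

/-- `F` is a Følner sequence of finite subsets of `Γ` with respect to the generating set `S`. -/
def IsFolnerSeq {Γ : Type*} [Group Γ] [DecidableEq Γ] (S : Finset Γ) (F : ℕ → Finset Γ) : Prop :=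
  (∀ n, (F n).Nonempty) ∧ ∀ s ∈ S,
    Tendsto (fun n => (((F n).image (· * s) \ F n).card : ℝ) / (F n).card) atTop (𝓝 0)

/-- A sofic representation of `Γ`: a map to the product of finite symmetric groups which is a
homomorphism into the metric ultraproduct `Σ = (∏ Sₙ)/H` and is faithful there
(`rk (φ γ) = 1` for `γ ≠ 1`). -/
def IsSoficRep (ω : Ultrafilter ℕ) {Γ : Type*} [Group Γ] (N : ℕ → ℕ)
    (φ : Γ → ∀ n : ℕ, Equiv.Perm (Fin (N n))) : Prop :=
  (∀ γ δ : Γ, Tendsto (fun n => rk ((φ γ n * φ δ n)⁻¹ * φ (γ * δ) n)) ω (𝓝 0)) ∧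
  (∀ γ : Γ, γ ≠ 1 → Tendsto (fun n => rk (φ γ n)) ω (𝓝 1))

/-- Two sofic representations are conjugate by an element `g` of the metric ultraproduct. -/
def ConjugateReps (ω : Ultrafilter ℕ) {Γ : Type*} [Group Γ] (N : ℕ → ℕ)
    (φ ψ : Γ → ∀ n : ℕ, Equiv.Perm (Fin (N n))) : Prop :=
  ∃ g : ∀ n : ℕ, Equiv.Perm (Fin (N n)), ∀ γ,
    Tendsto (fun n => rk ((g n * ψ γ n * (g n)⁻¹)⁻¹ * φ γ n)) ω (𝓝 0)

/-- A group is sofic: every finite subset admits arbitrarily good almost-multiplicative,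
almost-free approximations by permutations. -/
def IsSofic (G : Type*) [Group G] : Prop :=
  ∀ (F : Finset G) (ε : ℝ), 0 < ε → ∃ (n : ℕ) (f : G → Equiv.Perm (Fin n)), 0 < n ∧
    (∀ g ∈ F, ∀ h ∈ F, rk ((f g * f h)⁻¹ * f (g * h)) ≤ ε) ∧
    (∀ g ∈ F, g ≠ 1 → 1 - ε ≤ rk (f g))

open Classical in
/-- A group is amenable: it satisfies the Følner condition. -/
def IsAmenable (G : Type*) [Group G] : Prop :=
  ∀ (F : Finset G) (ε : ℝ), 0 < ε → ∃ A : Finset G, A.Nonempty ∧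
    ∀ g ∈ F, (((A.image (g * ·)) \ A).card : ℝ) ≤ ε * A.card

/-- Euclidean norm of a vector in `ℝ^m`. -/
noncomputable def vnorm {m : ℕ} (α : Fin m → ℝ) : ℝ :=
  Real.sqrt (∑ i, (α i) ^ 2)


set_option linter.unusedSectionVars false

namespace CGraph

variable {L : Type} [DecidableEq L]

lemma mapEdge_comp' {n p q : ℕ} (f : Fin p → Fin q) (g : Fin n → Fin p) (e : Fin n × Fin n × L) :
    mapEdge f (mapEdge g e) = mapEdge (f ∘ g) e := rfl

lemma mapEdge_injective {n p : ℕ} {f : Fin n → Fin p} (hf : Function.Injective f) :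
    Function.Injective (mapEdge (L := L) f) := by
  rintro ⟨a, b, c⟩ ⟨a', b', c'⟩ h
  simp only [mapEdge, Prod.mk.injEq] at h
  obtain ⟨h1, h2, h3⟩ := h
  simp [hf h1, hf h2, h3]

/-- An embedding of colored graphs. -/
def Emb (A B : CGraph L) : Prop :=
  ∃ f : Fin A.n → Fin B.n, Function.Injective f ∧ A.edges.image (mapEdge f) ⊆ B.edges

lemma emb_refl (A : CGraph L) : Emb A A :=
  ⟨id, fun _ _ h => h, by intro e he; simpa [mapEdge] using he⟩

lemma emb_bot (B : CGraph L) : Emb ⟨0, ∅⟩ B :=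
  ⟨Fin.elim0, fun x => x.elim0, by simp⟩

lemma emb_disjUnion {A B C D : CGraph L} (h1 : Emb A C) (h2 : Emb B D) :
    Emb (disjUnion A B) (disjUnion C D) := by
  obtain ⟨f, hf, hfe⟩ := h1
  obtain ⟨g, hg, hge⟩ := h2
  refine ⟨Fin.addCases (fun a => Fin.castAdd D.n (f a)) (fun b => Fin.natAdd C.n (g b)), ?_, ?_⟩
  · show Function.Injective (Fin.addCases (fun a => Fin.castAdd D.n (f a)) (fun b => Fin.natAdd C.n (g b)) : Fin (A.n + B.n) → Fin (C.n + D.n))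
    intro x y hxy
    induction x using Fin.addCases with
    | left a =>
      induction y using Fin.addCases with
      | left a' =>
        simp only [Fin.addCases_left] at hxy
        rw [hf (Fin.castAdd_injective _ _ hxy)]
      | right b' =>
        simp only [Fin.addCases_left, Fin.addCases_right] at hxy
        have := congrArg Fin.val hxy
        simp only [Fin.coe_castAdd, Fin.coe_natAdd] at this
        exact absurd this (by have := (f a).isLt; omega)
    | right b =>
      induction y using Fin.addCases with
      | left a' =>
        simp only [Fin.addCases_left, Fin.addCases_right] at hxy
        have := congrArg Fin.val hxy
        simp only [Fin.coe_castAdd, Fin.coe_natAdd] at this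
        exact absurd this (by have := (f a').isLt; omega)
      | right b' =>
        simp only [Fin.addCases_right] at hxy
        have hval := congrArg Fin.val hxy
        simp only [Fin.coe_natAdd] at hval
        have hb : b = b' := hg (Fin.val_injective (by omega))
        rw [hb]
  · show Finset.image (mapEdge (Fin.addCases (fun a => Fin.castAdd D.n (f a)) (fun b => Fin.natAdd C.n (g b)) : Fin (A.n + B.n) → Fin (C.n + D.n))) (A.edges.image (mapEdge (Fin.castAdd B.n)) ∪ B.edges.image (mapEdge (Fin.natAdd A.n))) ⊆ (C.edges.image (mapEdge (Fin.castAdd D.n)) ∪ D.edges.image (mapEdge (Fin.natAdd C.n)))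
    intro e he
    simp only [Finset.mem_image, Finset.mem_union] at he ⊢
    obtain ⟨e', he', rfl⟩ := he
    rcases he' with ⟨e'', he'', rfl⟩ | ⟨e'', he'', rfl⟩
    · left
      refine ⟨mapEdge f e'', hfe (Finset.mem_image_of_mem _ he''), ?_⟩
      simp [mapEdge, Fin.addCases_left]
    · right
      refine ⟨mapEdge g e'', hge (Finset.mem_image_of_mem _ he''), ?_⟩
      simp [mapEdge, Fin.addCases_right]

lemma emb_nsmul {A : CGraph L} : ∀ {j k : ℕ}, j ≤ k → Emb (nsmul j A) (nsmul k A) := by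
  intro j
  induction j with
  | zero => intro k _; exact emb_bot _
  | succ j ih =>
    intro k hk
    obtain ⟨k, rfl⟩ : ∃ k', k = k' + 1 := ⟨k - 1, by omega⟩
    exact emb_disjUnion (emb_refl A) (ih (by omega))

lemma emb_foldr {m : ℕ} (T : Fin m → CGraph L) (γ δ : Fin m → ℕ) (h : ∀ i, γ i ≤ δ i)
    (l : List (Fin m)) :
    Emb (l.foldr (fun i B => disjUnion (nsmul (γ i) (T i)) B) ⟨0, ∅⟩)
      (l.foldr (fun i B => disjUnion (nsmul (δ i) (T i)) B) ⟨0, ∅⟩) := by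
  induction l with
  | nil => exact emb_refl _
  | cons i l ih => exact emb_disjUnion (emb_nsmul (h i)) ih

lemma emb_lincomb {m : ℕ} (T : Fin m → CGraph L) {γ δ : Fin m → ℕ} (h : ∀ i, γ i ≤ δ i) :
    Emb (lincomb γ T) (lincomb δ T) :=
  emb_foldr T γ δ h _

lemma card_disjUnion (A B : CGraph L) :
    (disjUnion A B).edges.card = A.edges.card + B.edges.card := by
  rw [disjUnion, Finset.card_union_of_disjoint, Finset.card_image_of_injective _
      (mapEdge_injective (Fin.castAdd_injective _ _)),
    Finset.card_image_of_injective _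
      (mapEdge_injective (fun x y h => Fin.val_injective (by
        have := congrArg Fin.val h; simp only [Fin.coe_natAdd] at this; omega)))]
  rw [Finset.disjoint_left]
  rintro e he he'
  simp only [Finset.mem_image] at he he'
  obtain ⟨e1, _, rfl⟩ := he
  obtain ⟨e2, _, h2⟩ := he'
  have := congrArg (fun p => (p.1 : ℕ)) h2
  simp only [mapEdge, Fin.coe_natAdd, Fin.coe_castAdd] at this
  have := (e1.1).isLt
  omega

lemma card_nsmul (A : CGraph L) : ∀ k, (nsmul k A).edges.card = k * A.edges.card := by
  intro k
  induction k with
  | zero => simp [nsmul]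
  | succ k ih => rw [nsmul, card_disjUnion, ih]; ring

lemma card_foldr {m : ℕ} (T : Fin m → CGraph L) (γ : Fin m → ℕ) (l : List (Fin m)) :
    (l.foldr (fun i B => disjUnion (nsmul (γ i) (T i)) B) (⟨0, ∅⟩ : CGraph L)).edges.card
      = (l.map (fun i => γ i * (T i).edges.card)).sum := by
  induction l with
  | nil => simp
  | cons i l ih => simp [card_disjUnion, card_nsmul, ih]

lemma card_lincomb {m : ℕ} (T : Fin m → CGraph L) (γ : Fin m → ℕ) :
    (lincomb γ T).edges.card = ∑ i, γ i * (T i).edges.card := by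
  rw [lincomb, card_foldr, Fin.sum_univ_def]

lemma pos_n_of_edges {A : CGraph L} (h : A.edges.Nonempty) : 0 < A.n :=
  h.choose.1.pos

lemma mem_supp_image_range {n p : ℕ} {g : Fin n → Fin p} {s : Finset (Fin n × Fin n × L)}
    {x : Fin p} (hx : x ∈ supp (s.image (mapEdge g))) : ∃ c, g c = x := by
  simp only [supp, Finset.mem_union, Finset.mem_image] at hx
  rcases hx with ⟨e, ⟨e', _, rfl⟩, rfl⟩ | ⟨e, ⟨e', _, rfl⟩, rfl⟩ <;> exact ⟨_, rfl⟩

/-- Main glue lemma: a common embedded subgraph with enough edges yields an `r`-isomorphism. -/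
lemma riso_of_embs {r : ℕ} {A B C : CGraph L} (h1 : Emb C A) (h2 : Emb C B) (hB : 0 < B.n)
    (hA : ((1 : ℝ) - 1 / r) * A.edges.card ≤ C.edges.card)
    (hBc : ((1 : ℝ) - 1 / r) * B.edges.card ≤ C.edges.card) : RIso r A B := by
  obtain ⟨f₁, hf₁, hf₁e⟩ := h1
  obtain ⟨f₂, hf₂, hf₂e⟩ := h2
  rcases Nat.eq_zero_or_pos C.n with hC | hC
  · have hCe : C.edges = ∅ := by
      rw [Finset.eq_empty_iff_forall_notMem]
      intro e _
      exact absurd e.1.pos (by omega)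
    refine ⟨fun _ => ⟨0, hB⟩, ∅, ?_, ?_, ?_, ?_, ?_⟩
    · simp
    · simp [supp]
    · simp
    · simpa [hCe] using hA
    · simpa [hCe] using hBc
  · have : Nonempty (Fin C.n) := ⟨⟨0, hC⟩⟩
    set f : Fin A.n → Fin B.n := f₂ ∘ Function.invFun f₁ with hf
    have hfc : ∀ c, f (f₁ c) = f₂ c := fun c => by
      simp [hf, Function.leftInverse_invFun hf₁ c]
    refine ⟨f, C.edges.image (mapEdge f₁), hf₁e, ?_, ?_, ?_, ?_⟩
    · intro x hx y hy hxy
      obtain ⟨c, rfl⟩ := mem_supp_image_range (Finset.mem_coe.mp hx)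
      obtain ⟨c', rfl⟩ := mem_supp_image_range (Finset.mem_coe.mp hy)
      rw [hfc, hfc] at hxy
      rw [hf₂ hxy]
    · intro e he
      simp only [Finset.image_image, Finset.mem_image] at he
      obtain ⟨e', he', rfl⟩ := he
      have hcomp : (mapEdge f ∘ mapEdge f₁) e' = mapEdge f₂ e' := by
        simp only [Function.comp_apply, mapEdge_comp']
        have : f ∘ f₁ = f₂ := funext hfc
        rw [this]
      rw [Function.comp_apply] at hcomp ⊢
      rw [hcomp]
      exact hf₂e (Finset.mem_image_of_mem _ he')
    · rwa [Finset.card_image_of_injective _ (mapEdge_injective hf₁)]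
    · rwa [Finset.card_image_of_injective _ (mapEdge_injective hf₁)]

end CGraph

lemma abs_le_vnorm {m : ℕ} (x : Fin m → ℝ) (i : Fin m) : |x i| ≤ vnorm x := by
  rw [vnorm, ← Real.sqrt_sq_eq_abs]
  exact Real.sqrt_le_sqrt (Finset.single_le_sum (fun j _ => sq_nonneg (x j)) (Finset.mem_univ i))

lemma vnorm_le_sum {m : ℕ} (x : Fin m → ℝ) (hx : ∀ i, 0 ≤ x i) : vnorm x ≤ ∑ i, x i := by
  rw [vnorm]
  have h1 : ∑ i, (x i) ^ 2 ≤ (∑ i, x i) ^ 2 := by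
    have h2 := Finset.sum_le_sum (fun i (_ : i ∈ Finset.univ) =>
      mul_le_mul_of_nonneg_left
        (Finset.single_le_sum (fun j (_ : j ∈ Finset.univ) => hx j) (Finset.mem_univ i)) (hx i))
    calc ∑ i, (x i) ^ 2 = ∑ i, x i * x i := by simp [sq]
      _ ≤ ∑ i, x i * (∑ j, x j) := h2
      _ = (∑ i, x i) ^ 2 := by rw [← Finset.sum_mul, sq]
  calc Real.sqrt (∑ i, x i ^ 2) ≤ Real.sqrt ((∑ i, x i) ^ 2) := Real.sqrt_le_sqrt h1
    _ = ∑ i, x i := Real.sqrt_sq (Finset.sum_nonneg fun i _ => hx i)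

set_option maxHeartbeats 2000000

/-- Let `T₁, …, Tₘ` be colored graphs, each with at least one edge, `E` the
maximum number of edges among them, `r > 0` and `M = 2mEr`.  If `α, β ∈ ℕᵐ` are nonzero with
`‖β‖ ≥ M‖α‖` and `‖σ(α) − σ(β)‖ ≤ 1/M`, then `β·T` is `r`-isomorphic to an integer multiple
`(tα)·T` of `α·T`. -/
theorem nearby_vectors {L : Type} [DecidableEq L] {m : ℕ} (T : Fin m → CGraph L)
    (hT : ∀ i, 1 ≤ (T i).edges.card)
    (E : ℕ) (hE : E = Finset.univ.sup (fun i => (T i).edges.card))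
    (r : ℕ) (hr : 0 < r)
    (M : ℕ) (hM : M = 2 * m * E * r)
    (α β : Fin m → ℕ) (hα : α ≠ 0) (hβ : β ≠ 0)
    (hlen : (M : ℝ) * vnorm (fun i => (α i : ℝ)) ≤ vnorm (fun i => (β i : ℝ)))
    (hclose : vnorm (fun i =>
        (α i : ℝ) / vnorm (fun j => (α j : ℝ)) - (β i : ℝ) / vnorm (fun j => (β j : ℝ)))
      ≤ 1 / M) :
    ∃ t : ℕ, 0 < t ∧
      CGraph.RIso r (CGraph.lincomb β T) (CGraph.lincomb (fun i => t * α i) T) := by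
  classical
  obtain ⟨j, hj⟩ : ∃ j, α j ≠ 0 := Function.ne_iff.mp hα
  have hm : 0 < m := j.pos
  have hE1 : 1 ≤ E := by
    rw [hE]
    exact le_trans (hT j) (Finset.le_sup (f := fun i => (T i).edges.card) (Finset.mem_univ j))
  -- real versions of the basic quantities
  have hMr : (M : ℝ) = 2 * m * E * r := by rw [hM]; push_cast; ring
  have hrr1 : (1 : ℝ) ≤ (r : ℝ) := by exact_mod_cast hr
  have hEr1 : (1 : ℝ) ≤ (E : ℝ) := by exact_mod_cast hE1
  have hmr1 : (1 : ℝ) ≤ (m : ℝ) := by exact_mod_cast hm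
  have hMr2 : (2 : ℝ) ≤ (M : ℝ) := by
    rw [hMr]
    have h1 : (1 : ℝ) ≤ (m : ℝ) * (E : ℝ) := by nlinarith
    have h2 : (1 : ℝ) ≤ (m : ℝ) * (E : ℝ) * (r : ℝ) := by nlinarith
    nlinarith
  have hM0 : (0 : ℝ) < M := by linarith
  set a := vnorm (fun i => (α i : ℝ)) with hadef
  set b := vnorm (fun i => (β i : ℝ)) with hbdef
  have ha1 : (1 : ℝ) ≤ a := by
    rw [hadef, vnorm, Real.one_le_sqrt]
    calc (1 : ℝ) ≤ ((α j : ℝ)) ^ 2 := by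
          have h1 : (1 : ℝ) ≤ (α j : ℝ) := by exact_mod_cast Nat.one_le_iff_ne_zero.mpr hj
          nlinarith
      _ ≤ ∑ i, ((α i : ℝ)) ^ 2 :=
          Finset.single_le_sum (f := fun i => ((α i : ℝ)) ^ 2)
            (fun i _ => sq_nonneg _) (Finset.mem_univ j)
  have ha0 : (0 : ℝ) < a := lt_of_lt_of_le one_pos ha1
  have hb2 : (2 : ℝ) ≤ b := by nlinarith
  have hb0 : (0 : ℝ) < b := by linarith
  have hba : (M : ℝ) ≤ b / a := by rw [le_div_iff₀ ha0]; nlinarith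
  have haM : a ≤ b / (M : ℝ) := by rw [le_div_iff₀ hM0]; nlinarith
  -- coordinatewise bounds
  have hα_le : ∀ i, ((α i : ℝ)) ≤ a := fun i => by
    have h := abs_le_vnorm (fun i => (α i : ℝ)) i
    rwa [abs_of_nonneg (Nat.cast_nonneg _)] at h
  have hsumα : ∑ i, (α i : ℝ) ≤ (m : ℝ) * a := by
    calc ∑ i, (α i : ℝ) ≤ ∑ _i : Fin m, a := Finset.sum_le_sum fun i _ => hα_le i
      _ = (m : ℝ) * a := by simp [Finset.sum_const, nsmul_eq_mul]
  have ha_le : a ≤ ∑ i, (α i : ℝ) := vnorm_le_sum _ fun i => Nat.cast_nonneg _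
  have hb_le : b ≤ ∑ i, (β i : ℝ) := vnorm_le_sum _ fun i => Nat.cast_nonneg _
  have hdiff : ∀ i, |(α i : ℝ) / a - (β i : ℝ) / b| ≤ 1 / (M : ℝ) := fun i =>
    le_trans (abs_le_vnorm (fun i => (α i : ℝ) / a - (β i : ℝ) / b) i) hclose
  -- the multiplier t
  set t := ⌊b / a + 1 / 2⌋₊ with htdef
  have htub : (t : ℝ) ≤ b / a + 1 / 2 := Nat.floor_le (by positivity)
  have htlb : b / a - 1 / 2 ≤ (t : ℝ) := by
    have := Nat.lt_floor_add_one (b / a + 1 / 2)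
    rw [← htdef] at this
    linarith
  have ht1 : 1 ≤ t := Nat.le_floor (by push_cast; linarith)
  refine ⟨t, ht1, ?_⟩
  -- edge-count abbreviations (real)
  have hci1 : ∀ i, (1 : ℝ) ≤ ((T i).edges.card : ℝ) := fun i => by exact_mod_cast hT i
  have hciE : ∀ i, ((T i).edges.card : ℝ) ≤ (E : ℝ) := fun i => by
    have h := Finset.le_sup (f := fun i => (T i).edges.card) (Finset.mem_univ i)
    rw [← hE] at h
    exact_mod_cast h
  have hci0 : ∀ i, (0 : ℝ) ≤ ((T i).edges.card : ℝ) := fun i => Nat.cast_nonneg _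
  -- key inequality 1 : N_A - N_C ≤ err ; key inequality 2 : N_B - N_C ≤ err
  have h1 : (∑ i, (β i : ℝ) * ((T i).edges.card : ℝ))
      - (∑ i, min ((β i : ℝ)) ((t : ℝ) * (α i : ℝ)) * ((T i).edges.card : ℝ))
      ≤ ∑ i, |(t : ℝ) * (α i : ℝ) - (β i : ℝ)| * ((T i).edges.card : ℝ) := by
    rw [← Finset.sum_sub_distrib]
    refine Finset.sum_le_sum fun i _ => ?_
    rw [← sub_mul]
    refine mul_le_mul_of_nonneg_right ?_ (hci0 i)
    rcases le_total ((β i : ℝ)) ((t : ℝ) * (α i : ℝ)) with h | h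
    · rw [min_eq_left h]; simp [abs_nonneg]
    · rw [min_eq_right h]
      calc (β i : ℝ) - (t : ℝ) * (α i : ℝ) ≤ |(β i : ℝ) - (t : ℝ) * (α i : ℝ)| := le_abs_self _
        _ = |(t : ℝ) * (α i : ℝ) - (β i : ℝ)| := abs_sub_comm _ _
  have h2 : (∑ i, (t : ℝ) * (α i : ℝ) * ((T i).edges.card : ℝ))
      - (∑ i, min ((β i : ℝ)) ((t : ℝ) * (α i : ℝ)) * ((T i).edges.card : ℝ))
      ≤ ∑ i, |(t : ℝ) * (α i : ℝ) - (β i : ℝ)| * ((T i).edges.card : ℝ) := by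
    rw [← Finset.sum_sub_distrib]
    refine Finset.sum_le_sum fun i _ => ?_
    rw [← sub_mul]
    refine mul_le_mul_of_nonneg_right ?_ (hci0 i)
    rcases le_total ((β i : ℝ)) ((t : ℝ) * (α i : ℝ)) with h | h
    · rw [min_eq_left h]
      exact le_abs_self _
    · rw [min_eq_right h]; simp [abs_nonneg]
  -- bound on err
  have hstep : ∀ i, |(t : ℝ) * (α i : ℝ) - (β i : ℝ)|
      ≤ (1 / 2) * (α i : ℝ) + b * |(α i : ℝ) / a - (β i : ℝ) / b| := by
    intro i
    have hid : (t : ℝ) * (α i : ℝ) - (β i : ℝ)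
        = ((t : ℝ) - b / a) * (α i : ℝ) + b * ((α i : ℝ) / a - (β i : ℝ) / b) := by
      field_simp
      ring
    rw [hid]
    have habs : |(t : ℝ) - b / a| ≤ 1 / 2 := abs_le.mpr ⟨by linarith, by linarith⟩
    calc |((t : ℝ) - b / a) * (α i : ℝ) + b * ((α i : ℝ) / a - (β i : ℝ) / b)|
        ≤ |((t : ℝ) - b / a) * (α i : ℝ)| + |b * ((α i : ℝ) / a - (β i : ℝ) / b)| := abs_add_le _ _
      _ = |(t : ℝ) - b / a| * (α i : ℝ) + b * |(α i : ℝ) / a - (β i : ℝ) / b| := by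
          rw [abs_mul, abs_mul, abs_of_nonneg (show (0:ℝ) ≤ ((α i : ℕ) : ℝ) from Nat.cast_nonneg _),
            abs_of_nonneg hb0.le]
      _ ≤ (1 / 2) * (α i : ℝ) + b * |(α i : ℝ) / a - (β i : ℝ) / b| := by
          have := mul_le_mul_of_nonneg_right habs (Nat.cast_nonneg (α i) : (0:ℝ) ≤ (α i : ℝ))
          linarith
  have hsumdiff : ∑ i, |(α i : ℝ) / a - (β i : ℝ) / b| ≤ (m : ℝ) * (1 / (M : ℝ)) := by
    calc ∑ i, |(α i : ℝ) / a - (β i : ℝ) / b| ≤ ∑ _i : Fin m, 1 / (M : ℝ) :=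
          Finset.sum_le_sum fun i _ => hdiff i
      _ = (m : ℝ) * (1 / (M : ℝ)) := by simp [Finset.sum_const, nsmul_eq_mul]
  have hE0 : (E : ℝ) ≠ 0 := by linarith
  have hm0 : (m : ℝ) ≠ 0 := by linarith
  have hr0 : (r : ℝ) ≠ 0 := by linarith
  have hrpos : (0 : ℝ) < (r : ℝ) := by linarith
  have herr : ∑ i, |(t : ℝ) * (α i : ℝ) - (β i : ℝ)| * ((T i).edges.card : ℝ)
      ≤ 3 * b / (4 * (r : ℝ)) := by
    have hb1 : ∑ i, |(t : ℝ) * (α i : ℝ) - (β i : ℝ)| * ((T i).edges.card : ℝ)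
        ≤ ∑ i, ((1 / 2) * (α i : ℝ) + b * |(α i : ℝ) / a - (β i : ℝ) / b|) * (E : ℝ) := by
      refine Finset.sum_le_sum fun i _ => ?_
      refine mul_le_mul (hstep i) (hciE i) (hci0 i) ?_
      have : (0 : ℝ) ≤ b * |(α i : ℝ) / a - (β i : ℝ) / b| := mul_nonneg hb0.le (abs_nonneg _)
      positivity
    have hb2' : ∑ i, ((1 / 2) * (α i : ℝ) + b * |(α i : ℝ) / a - (β i : ℝ) / b|) * (E : ℝ)
        = ((1 / 2) * (∑ i, (α i : ℝ)) + b * ∑ i, |(α i : ℝ) / a - (β i : ℝ) / b|) * (E : ℝ) := by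
      rw [← Finset.sum_mul, Finset.sum_add_distrib, ← Finset.mul_sum, ← Finset.mul_sum]
    have hma : (m : ℝ) * a ≤ (m : ℝ) * (b / (M : ℝ)) :=
      mul_le_mul_of_nonneg_left haM (Nat.cast_nonneg m)
    have hbd : b * (∑ i, |(α i : ℝ) / a - (β i : ℝ) / b|) ≤ b * ((m : ℝ) * (1 / (M : ℝ))) :=
      mul_le_mul_of_nonneg_left hsumdiff hb0.le
    have hb3 : ((1 / 2) * (∑ i, (α i : ℝ)) + b * ∑ i, |(α i : ℝ) / a - (β i : ℝ) / b|) * (E : ℝ)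
        ≤ ((1 / 2) * ((m : ℝ) * (b / (M : ℝ))) + b * ((m : ℝ) * (1 / (M : ℝ)))) * (E : ℝ) := by
      refine mul_le_mul_of_nonneg_right ?_ (by linarith)
      linarith
    have hfin : ((1 / 2) * ((m : ℝ) * (b / (M : ℝ))) + b * ((m : ℝ) * (1 / (M : ℝ)))) * (E : ℝ)
        = 3 * b / (4 * (r : ℝ)) := by
      rw [hMr]
      field_simp
      ring
    linarith
  -- lower bounds on the numbers of edges
  have hNAb : b ≤ ∑ i, (β i : ℝ) * ((T i).edges.card : ℝ) := by
    calc b ≤ ∑ i, (β i : ℝ) := hb_le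
      _ ≤ ∑ i, (β i : ℝ) * ((T i).edges.card : ℝ) :=
          Finset.sum_le_sum fun i _ => le_mul_of_one_le_right (Nat.cast_nonneg _) (hci1 i)
  have hS_lb : a ≤ ∑ i, (α i : ℝ) * ((T i).edges.card : ℝ) := by
    calc a ≤ ∑ i, (α i : ℝ) := ha_le
      _ ≤ ∑ i, (α i : ℝ) * ((T i).edges.card : ℝ) :=
          Finset.sum_le_sum fun i _ => le_mul_of_one_le_right (Nat.cast_nonneg _) (hci1 i)
  have hS0 : (0 : ℝ) ≤ ∑ i, (α i : ℝ) * ((T i).edges.card : ℝ) :=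
    Finset.sum_nonneg fun i _ => mul_nonneg (Nat.cast_nonneg _) (hci0 i)
  have hS_ub : ∑ i, (α i : ℝ) * ((T i).edges.card : ℝ) ≤ b / 2 := by
    have e1 : ∑ i, (α i : ℝ) * ((T i).edges.card : ℝ) ≤ (∑ i, (α i : ℝ)) * (E : ℝ) := by
      rw [Finset.sum_mul]
      exact Finset.sum_le_sum fun i _ =>
        mul_le_mul_of_nonneg_left (hciE i) (Nat.cast_nonneg _)
    have e2 : (∑ i, (α i : ℝ)) * (E : ℝ) ≤ ((m : ℝ) * a) * (E : ℝ) :=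
      mul_le_mul_of_nonneg_right hsumα (by linarith)
    have e3 : ((m : ℝ) * a) * (E : ℝ) ≤ ((m : ℝ) * (b / (M : ℝ))) * (E : ℝ) := by
      refine mul_le_mul_of_nonneg_right ?_ (by linarith)
      exact mul_le_mul_of_nonneg_left haM (Nat.cast_nonneg m)
    have e4 : ((m : ℝ) * (b / (M : ℝ))) * (E : ℝ) = b / (2 * (r : ℝ)) := by
      rw [hMr]
      field_simp
    have e5 : b / (2 * (r : ℝ)) ≤ b / 2 := by
      rw [div_le_div_iff₀ (by linarith) (by norm_num)]
      nlinarith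
    linarith
  have hNBb : 3 * b / 4 ≤ ∑ i, (t : ℝ) * (α i : ℝ) * ((T i).edges.card : ℝ) := by
    have hNB_eq : ∑ i, (t : ℝ) * (α i : ℝ) * ((T i).edges.card : ℝ)
        = (t : ℝ) * ∑ i, (α i : ℝ) * ((T i).edges.card : ℝ) := by
      rw [Finset.mul_sum]
      exact Finset.sum_congr rfl fun i _ => by ring
    rw [hNB_eq]
    have h5 : (b / a - 1 / 2) * (∑ i, (α i : ℝ) * ((T i).edges.card : ℝ))
        ≤ (t : ℝ) * (∑ i, (α i : ℝ) * ((T i).edges.card : ℝ)) :=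
      mul_le_mul_of_nonneg_right htlb hS0
    have h6 : b ≤ (b / a) * (∑ i, (α i : ℝ) * ((T i).edges.card : ℝ)) := by
      have h7 := mul_le_mul_of_nonneg_left hS_lb (div_nonneg hb0.le ha0.le)
      rwa [div_mul_cancel₀ _ (ne_of_gt ha0)] at h7
    have h8 : (b / a - 1 / 2) * (∑ i, (α i : ℝ) * ((T i).edges.card : ℝ))
        = (b / a) * (∑ i, (α i : ℝ) * ((T i).edges.card : ℝ))
          - (1 / 2) * (∑ i, (α i : ℝ) * ((T i).edges.card : ℝ)) := by ring
    linarith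
  -- assemble
  have hembA : CGraph.Emb (CGraph.lincomb (fun i => min (β i) (t * α i)) T)
      (CGraph.lincomb β T) := CGraph.emb_lincomb T fun i => min_le_left _ _
  have hembB : CGraph.Emb (CGraph.lincomb (fun i => min (β i) (t * α i)) T)
      (CGraph.lincomb (fun i => t * α i) T) := CGraph.emb_lincomb T fun i => min_le_right _ _
  have hBcard : 0 < (CGraph.lincomb (fun i => t * α i) T).edges.card := by
    rw [CGraph.card_lincomb]
    refine Finset.sum_pos' (fun i _ => Nat.zero_le _) ⟨j, Finset.mem_univ j, ?_⟩
    exact Nat.mul_pos (Nat.mul_pos ht1 (Nat.pos_of_ne_zero hj)) (hT j)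
  have hBn : 0 < (CGraph.lincomb (fun i => t * α i) T).n :=
    CGraph.pos_n_of_edges (Finset.card_pos.mp hBcard)
  apply CGraph.riso_of_embs hembA hembB hBn
  · rw [CGraph.card_lincomb, CGraph.card_lincomb]
    push_cast
    have h3 : 3 * b / (4 * (r : ℝ))
        ≤ (∑ i, (β i : ℝ) * ((T i).edges.card : ℝ)) / (r : ℝ) := by
      rw [div_le_div_iff₀ (by positivity) hrpos]
      nlinarith
    have h4 : ((1 : ℝ) - 1 / (r : ℝ)) * (∑ i, (β i : ℝ) * ((T i).edges.card : ℝ))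
        = (∑ i, (β i : ℝ) * ((T i).edges.card : ℝ))
          - (∑ i, (β i : ℝ) * ((T i).edges.card : ℝ)) / (r : ℝ) := by
      ring
    linarith
  · rw [CGraph.card_lincomb, CGraph.card_lincomb]
    push_cast
    have h3 : 3 * b / (4 * (r : ℝ))
        ≤ (∑ i, (t : ℝ) * (α i : ℝ) * ((T i).edges.card : ℝ)) / (r : ℝ) := by
      rw [div_le_div_iff₀ (by positivity) hrpos]
      nlinarith
    have h4 : ((1 : ℝ) - 1 / (r : ℝ)) * (∑ i, (t : ℝ) * (α i : ℝ) * ((T i).edges.card : ℝ))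
        = (∑ i, (t : ℝ) * (α i : ℝ) * ((T i).edges.card : ℝ))
          - (∑ i, (t : ℝ) * (α i : ℝ) * ((T i).edges.card : ℝ)) / (r : ℝ) := by
      ring
    linarith
end

section
/- Let α and β be partitions of a finite set S such that each α-class meets each β-class in at most one element. Suppose G is a graph with vertex set contained in S such that every edge of G has both endpoints in the same α-class or both endpoints in the same β-class. Then every simple cycle of G of length less than 2r lies entirely within a single α-class or entirely within a single β-class, provided every simple cycle in the incidence graph of α and β has length greater than 2r. -/
/-- The incidence graph of two partitions (given by their class maps `cα`, `cβ`): a bipartite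
graph on the `α`-classes and `β`-classes, where each element `s` joins its `α`-class to its
`β`-class. -/
def incGraph {S A B : Type*} (cα : S → A) (cβ : S → B) : SimpleGraph (A ⊕ B) where
  Adj u v := ∃ s : S, (u = .inl (cα s) ∧ v = .inr (cβ s)) ∨ (u = .inr (cβ s) ∧ v = .inl (cα s))
  symm := by
    constructor
    rintro u v ⟨s, ⟨h1, h2⟩ | ⟨h1, h2⟩⟩
    · exact ⟨s, Or.inr ⟨h2, h1⟩⟩
    · exact ⟨s, Or.inl ⟨h2, h1⟩⟩
  loopless := by
    constructor
    rintro u ⟨s, ⟨h1, h2⟩ | ⟨h1, h2⟩⟩ <;> subst h1 <;> simp at h2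


lemma incGraph_adj_of {S A B : Type*} (cα : S → A) (cβ : S → B) {u v : A ⊕ B} (s : S)
    (h : (u = .inl (cα s) ∧ v = .inr (cβ s)) ∨ (u = .inr (cβ s) ∧ v = .inl (cα s))) :
    (incGraph cα cβ).Adj u v := ⟨s, h⟩

open SimpleGraph

lemma split_closed_trail {V : Type*} [DecidableEq V] {G : SimpleGraph V} {w : V} (r : G.Walk w w)
    (htr : r.IsTrail) (hcount : 2 ≤ r.support.tail.count w) :
    ∃ c1 : G.Walk w w, c1.IsTrail ∧ c1 ≠ .nil ∧ c1.length < r.length := by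
  cases r with
  | nil => simp at hcount
  | cons h q =>
    rename_i u
    have hwq : w ∈ q.support := q.end_mem_support
    have hspec := q.take_spec hwq
    have hcount1 : (q.takeUntil w hwq).support.count w = 1 :=
      q.count_support_takeUntil_eq_one hwq
    have hsupp : q.support = (q.takeUntil w hwq).support ++ (q.dropUntil w hwq).support.tail := by
      conv_lhs => rw [← hspec]
      exact Walk.support_append _ _
    have hcq : 2 ≤ q.support.count w := by
      simpa [Walk.support_cons] using hcount
    have hc2 : 1 ≤ ((q.dropUntil w hwq).support.tail).count w := by
      rw [hsupp, List.count_append, hcount1] at hcq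
      omega
    have hq2 : ¬ (q.dropUntil w hwq).Nil := by
      intro hnil
      rw [hnil.eq_nil] at hc2
      simp at hc2
    have hlenq : (q.takeUntil w hwq).length + (q.dropUntil w hwq).length = q.length := by
      have := congr_arg Walk.length hspec
      rwa [Walk.length_append] at this
    have hq2len : 1 ≤ (q.dropUntil w hwq).length := by
      rcases Nat.eq_zero_or_pos (q.dropUntil w hwq).length with h0 | h1
      · exact absurd (Walk.nil_iff_length_eq.mpr h0) hq2
      · exact h1
    refine ⟨.cons h (q.takeUntil w hwq), ?_, by simp, ?_⟩
    · constructor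
      have hr : (Walk.cons h q).edges
          = s(w, u) :: ((q.takeUntil w hwq).edges ++ (q.dropUntil w hwq).edges) := by
        rw [Walk.edges_cons]
        congr 1
        conv_lhs => rw [← hspec]
        exact Walk.edges_append _ _
      have hnd := htr.edges_nodup
      rw [hr] at hnd
      have hsub : List.Sublist (s(w, u) :: (q.takeUntil w hwq).edges)
          (s(w, u) :: ((q.takeUntil w hwq).edges ++ (q.dropUntil w hwq).edges)) :=
        List.Sublist.cons₂ _ (List.sublist_append_left _ _)
      simpa [Walk.edges_cons] using hnd.sublist hsub
    · simp only [Walk.length_cons]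
      omega

lemma exists_cycle_of_closed_trail {V : Type*} {G : SimpleGraph V} :
    ∀ (n : ℕ) {v : V} (p : G.Walk v v), p.length ≤ n → p.IsTrail → p ≠ .nil →
    ∃ (w : V) (c : G.Walk w w), c.IsCycle ∧ c.length ≤ p.length := by
  classical
  intro n
  induction n with
  | zero =>
    intro v p hlen _ hnil
    exact absurd (Walk.nil_iff_length_eq.mpr (Nat.le_zero.mp hlen)).eq_nil hnil
  | succ n ih =>
    intro v p hlen htrail hnil
    by_cases hnd : p.support.tail.Nodup
    · exact ⟨v, p, ⟨⟨htrail, hnil⟩, hnd⟩, le_rfl⟩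
    · obtain ⟨w, hw⟩ := List.exists_duplicate_iff_not_nodup.2 hnd
      have hc2 : 2 ≤ p.support.tail.count w := List.duplicate_iff_two_le_count.1 hw
      have hwmem : w ∈ p.support := List.mem_of_mem_tail hw.mem
      have hrtrail := htrail.rotate hwmem
      have hrlen : (p.rotate w hwmem).length = p.length := by
        rw [Walk.rotate, Walk.length_append, add_comm, ← Walk.length_append, p.take_spec hwmem]
      have hrcount : 2 ≤ (p.rotate w hwmem).support.tail.count w := by
        rw [(p.support_rotate w hwmem).perm.count_eq]
        exact hc2
      obtain ⟨c1, hc1tr, hc1nil, hc1len⟩ := split_closed_trail _ hrtrail hrcount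
      obtain ⟨w', c, hc, hle⟩ := ih c1 (by omega) hc1tr (fun h => hc1nil h)
      exact ⟨w', c, hc, by omega⟩

section
variable {S A B : Type*} (cα : S → A) (cβ : S → B)

/-- the "pending position" in the incidence graph: α-class if `b`, β-class otherwise -/
def stv (b : Bool) (s : S) : A ⊕ B := if b then Sum.inl (cα s) else Sum.inr (cβ s)

@[simp] lemma stv_true (s : S) : stv cα cβ true s = Sum.inl (cα s) := rfl
@[simp] lemma stv_false (s : S) : stv cα cβ false s = Sum.inr (cβ s) := rfl

variable {G : SimpleGraph S} (hedge : ∀ x y : S, G.Adj x y → cα x = cα y ∨ cβ x = cβ y)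

open Classical in
/-- Contract a walk of `G` to a walk in the incidence graph, keeping only class changes. -/
noncomputable def contr : ∀ {u v : S}, G.Walk u v → (b : Bool) →
    Σ b' : Bool, (incGraph cα cβ).Walk (stv cα cβ b u) (stv cα cβ b' v)
  | _, _, .nil, b => ⟨b, .nil⟩
  | u, v, .cons (v := w) h q, true =>
    if hα : cα u = cα w then
      ⟨(contr q true).1, (contr q true).2.copy (by rw [stv_true, stv_true, hα]) rfl⟩
    else
      ⟨(contr q false).1,
        .cons (incGraph_adj_of cα cβ u (Or.inl ⟨stv_true cα cβ u, rfl⟩))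
          ((contr q false).2.copy (by rw [stv_false, (hedge u w h).resolve_left hα]) rfl)⟩
  | u, v, .cons (v := w) h q, false =>
    if hα : cα u = cα w then
      ⟨(contr q true).1,
        .cons (incGraph_adj_of cα cβ u (Or.inr ⟨stv_false cα cβ u, rfl⟩))
          ((contr q true).2.copy (by rw [stv_true, hα]) rfl)⟩
    else
      ⟨(contr q false).1, (contr q false).2.copy (by rw [stv_false, stv_false, (hedge u w h).resolve_left hα]) rfl⟩


lemma contr_edges : ∀ {u v : S} (p : G.Walk u v) (b : Bool),
    ∃ l : List S, (contr cα cβ hedge p b).2.edges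
        = l.map (fun s => s(Sum.inl (cα s), Sum.inr (cβ s)))
      ∧ List.Sublist l p.support.dropLast := by
  intro u v p
  induction p with
  | nil => intro b; exact ⟨[], by simp [contr], by simp⟩
  | cons h q ih =>
    rename_i u w v
    intro b
    have hdl : (Walk.cons h q).support.dropLast = u :: q.support.dropLast := by
      rw [Walk.support_cons, List.dropLast_cons_of_ne_nil q.support_ne_nil]
    cases b
    · by_cases hα : cα u = cα w
      · obtain ⟨l, hl, hs⟩ := ih true
        refine ⟨u :: l, ?_, ?_⟩
        · simp only [contr]
          rw [dif_pos hα]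
          simp only [Walk.edges_cons, Walk.edges_copy, hl, List.map_cons]
          rw [Sym2.eq_swap]
          simp
        · rw [hdl]; exact hs.cons₂ u
      · obtain ⟨l, hl, hs⟩ := ih false
        refine ⟨l, ?_, ?_⟩
        · simp only [contr]
          rw [dif_neg hα]
          simp only [Walk.edges_copy, hl]
        · rw [hdl]; exact hs.cons u
    · by_cases hα : cα u = cα w
      · obtain ⟨l, hl, hs⟩ := ih true
        refine ⟨l, ?_, ?_⟩
        · simp only [contr]
          rw [dif_pos hα]
          simp only [Walk.edges_copy, hl]
        · rw [hdl]; exact hs.cons u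
      · obtain ⟨l, hl, hs⟩ := ih false
        refine ⟨u :: l, ?_, ?_⟩
        · simp only [contr]
          rw [dif_neg hα]
          simp only [Walk.edges_cons, Walk.edges_copy, hl, List.map_cons]
          simp
        · rw [hdl]; exact hs.cons₂ u

lemma contr_mono : ∀ {u v : S} (p : G.Walk u v) (b : Bool),
    (contr cα cβ hedge p b).2.length = 0 →
    ∀ y ∈ p.support, (b = true → cα y = cα u) ∧ (b = false → cβ y = cβ u) := by
  intro u v p
  induction p with
  | nil =>
    intro b _ y hy
    simp only [Walk.support_nil, List.mem_singleton] at hy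
    subst hy
    exact ⟨fun _ => rfl, fun _ => rfl⟩
  | cons h q ih =>
    rename_i u w v
    intro b hlen y hy
    rw [Walk.support_cons, List.mem_cons] at hy
    cases b
    · by_cases hα : cα u = cα w
      · exfalso
        simp only [contr] at hlen
        rw [dif_pos hα] at hlen
        rw [Walk.length_cons] at hlen
        omega
      · have hβ : cβ u = cβ w := (hedge u w h).resolve_left hα
        simp only [contr] at hlen
        rw [dif_neg hα] at hlen
        simp only [Walk.length_copy] at hlen
        rcases hy with rfl | hy
        · exact ⟨by simp, fun _ => rfl⟩
        · have := (ih false hlen y hy).2 rfl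
          exact ⟨by simp, fun _ => this.trans hβ.symm⟩
    · by_cases hα : cα u = cα w
      · simp only [contr] at hlen
        rw [dif_pos hα] at hlen
        simp only [Walk.length_copy] at hlen
        rcases hy with rfl | hy
        · exact ⟨fun _ => rfl, by simp⟩
        · have := (ih true hlen y hy).1 rfl
          exact ⟨fun _ => this.trans hα.symm, by simp⟩
      · exfalso
        simp only [contr] at hlen
        rw [dif_neg hα] at hlen
        rw [Walk.length_cons] at hlen
        omega

end

/-- Let `α`, `β` be partitions of `S` (class maps `cα`, `cβ`) such that each
`α`-class meets each `β`-class in at most one element, and suppose every simple cycle of the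
incidence graph is longer than `2r`.  If every edge of a graph `G` on `S` joins two elements
of the same `α`-class or of the same `β`-class, then every simple cycle of `G` of length less
than `2r` lies entirely within a single `α`-class or within a single `β`-class. -/
theorem cycles_in_one_class {S A B : Type*} (cα : S → A) (cβ : S → B)
    (hmeet : ∀ x y : S, cα x = cα y → cβ x = cβ y → x = y)
    (r : ℕ)
    (hgirth : ∀ (v : A ⊕ B) (c : (incGraph cα cβ).Walk v v), c.IsCycle → 2 * r < c.length)
    (G : SimpleGraph S)
    (hedge : ∀ x y : S, G.Adj x y → cα x = cα y ∨ cβ x = cβ y) :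
    ∀ (x : S) (c : G.Walk x x), c.IsCycle → c.length < 2 * r →
      (∀ y ∈ c.support, cα y = cα x) ∨ (∀ y ∈ c.support, cβ y = cβ x) := by
  intro x c hc hlt
  classical
  by_contra hcon
  push_neg at hcon
  obtain ⟨⟨y1, hy1m, hy1⟩, y2, hy2m, hy2⟩ := hcon
  cases c with
  | nil => exact hc.ne_nil rfl
  | cons h q =>
    rename_i y
    have hsupnd : q.support.Nodup := by
      have := hc.support_nodup
      simpa [Walk.support_cons] using this
    have hq_eq : q.support.dropLast ++ [x] = q.support := by
      conv_rhs => rw [← List.dropLast_append_getLast q.support_ne_nil]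
      rw [q.getLast_support]
    have hxdl : x ∉ q.support.dropLast := by
      rw [← hq_eq, List.nodup_append] at hsupnd
      exact fun hx => hsupnd.2.2 x hx x (List.mem_singleton_self x) rfl
    have hsupnd' : q.support.Nodup := by
      have := hc.support_nodup
      simpa [Walk.support_cons] using this
    have hinj : Function.Injective
        (fun s : S => (s(Sum.inl (cα s), Sum.inr (cβ s)) : Sym2 (A ⊕ B))) := by
      intro a b hab
      simp only [Sym2.eq, Sym2.rel_iff', Prod.mk.injEq, Prod.swap_prod_mk, Sum.inl.injEq,
        Sum.inr.injEq, reduceCtorEq, and_false, false_and, or_false] at hab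
      exact hmeet a b hab.1 hab.2
    have hdll : q.support.dropLast.length = q.length := by
      have h1 := congrArg List.length hq_eq
      rw [List.length_append, Walk.length_support] at h1
      simpa using h1
    have hql : q.length + 1 < 2 * r := by simpa using hlt
    have hy1m' : y1 = x ∨ y1 ∈ q.support := by simpa [Walk.support_cons] using hy1m
    have hy2m' : y2 = x ∨ y2 ∈ q.support := by simpa [Walk.support_cons] using hy2m
    by_cases hα : cα x = cα y
    · obtain ⟨l, hl, hsub⟩ := contr_edges cα cβ hedge q true
      rcases hW : contr cα cβ hedge q true with ⟨b', W⟩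
      rw [hW] at hl
      have hlnd : l.Nodup := (hsub.trans (List.dropLast_sublist _)).nodup hsupnd'
      have hxl : x ∉ l := fun hx => hxdl (hsub.subset hx)
      have hll : l.length ≤ q.length := hdll ▸ hsub.length_le
      have hWl : W.length = l.length := by rw [← Walk.length_edges, hl, List.length_map]
      cases b' with
      | true =>
        have hne : (W.copy (show stv cα cβ true y = Sum.inl (cα x) by rw [stv_true, hα]) (stv_true cα cβ x)) ≠ .nil := by
          intro hnil
          have h0 : W.length = 0 := by
            have := congrArg Walk.length hnil
            simpa only [Walk.length_copy, Walk.length_nil] using this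
          have hm := contr_mono cα cβ hedge q true (by rw [hW]; exact h0)
          rcases hy1m' with rfl | hmem
          · exact hy1 rfl
          · exact hy1 (((hm y1 hmem).1 rfl).trans hα.symm)
        obtain ⟨w', cyc, hcyc, hclen⟩ := exists_cycle_of_closed_trail
          (W.copy (show stv cα cβ true y = Sum.inl (cα x) by rw [stv_true, hα]) (stv_true cα cβ x)).length _ le_rfl
          ⟨by rw [Walk.edges_copy, hl]; exact hlnd.map hinj⟩ hne
        have hg := hgirth _ cyc hcyc
        rw [Walk.length_copy] at hclen
        omega
      | false =>
        set CW := (W.copy (show stv cα cβ true y = Sum.inl (cα x) by rw [stv_true, hα]) rfl).concat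
          (incGraph_adj_of cα cβ x (Or.inr ⟨stv_false cα cβ x, rfl⟩)) with hCW
        have hCWe : CW.edges
            = (l ++ [x]).map (fun s => (s(Sum.inl (cα s), Sum.inr (cβ s)) : Sym2 (A ⊕ B))) := by
          rw [hCW, Walk.edges_concat, Walk.edges_copy, hl, List.map_append]
          simp [Sym2.eq_swap]
        have hCWlen : CW.length = l.length + 1 := by
          rw [← Walk.length_edges, hCWe, List.length_map, List.length_append]
          simp
        have hne : CW ≠ .nil := by
          intro hnil
          have := congrArg Walk.length hnil
          rw [hCWlen] at this
          simp at this
        obtain ⟨w', cyc, hcyc, hclen⟩ := exists_cycle_of_closed_trail CW.length _ le_rfl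
          ⟨by
            rw [hCWe]
            exact (by simp [List.nodup_append, hlnd, hxl]; rintro a ha rfl; exact hxl ha : (l ++ [x]).Nodup).map hinj⟩ hne
        have hg := hgirth _ cyc hcyc
        omega
    · have hβ : cβ x = cβ y := (hedge x y h).resolve_left hα
      obtain ⟨l, hl, hsub⟩ := contr_edges cα cβ hedge q false
      rcases hW : contr cα cβ hedge q false with ⟨b', W⟩
      rw [hW] at hl
      have hlnd : l.Nodup := (hsub.trans (List.dropLast_sublist _)).nodup hsupnd'
      have hxl : x ∉ l := fun hx => hxdl (hsub.subset hx)
      have hll : l.length ≤ q.length := hdll ▸ hsub.length_le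
      have hWl : W.length = l.length := by rw [← Walk.length_edges, hl, List.length_map]
      cases b' with
      | false =>
        have hne : (W.copy (show stv cα cβ false y = Sum.inr (cβ x) by rw [stv_false, hβ]) (stv_false cα cβ x)) ≠ .nil := by
          intro hnil
          have h0 : W.length = 0 := by
            have := congrArg Walk.length hnil
            simpa only [Walk.length_copy, Walk.length_nil] using this
          have hm := contr_mono cα cβ hedge q false (by rw [hW]; exact h0)
          rcases hy2m' with rfl | hmem
          · exact hy2 rfl
          · exact hy2 (((hm y2 hmem).2 rfl).trans hβ.symm)
        obtain ⟨w', cyc, hcyc, hclen⟩ := exists_cycle_of_closed_trail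
          (W.copy (show stv cα cβ false y = Sum.inr (cβ x) by rw [stv_false, hβ]) (stv_false cα cβ x)).length _ le_rfl
          ⟨by rw [Walk.edges_copy, hl]; exact hlnd.map hinj⟩ hne
        have hg := hgirth _ cyc hcyc
        rw [Walk.length_copy] at hclen
        omega
      | true =>
        set CW := (W.copy (show stv cα cβ false y = Sum.inr (cβ x) by rw [stv_false, hβ]) rfl).concat
          (incGraph_adj_of cα cβ x (Or.inl ⟨stv_true cα cβ x, rfl⟩)) with hCW
        have hCWe : CW.edges
            = (l ++ [x]).map (fun s => (s(Sum.inl (cα s), Sum.inr (cβ s)) : Sym2 (A ⊕ B))) := by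
          rw [hCW, Walk.edges_concat, Walk.edges_copy, hl, List.map_append]
          simp [Sym2.eq_swap]
        have hCWlen : CW.length = l.length + 1 := by
          rw [← Walk.length_edges, hCWe, List.length_map, List.length_append]
          simp
        have hne : CW ≠ .nil := by
          intro hnil
          have := congrArg Walk.length hnil
          rw [hCWlen] at this
          simp at this
        obtain ⟨w', cyc, hcyc, hclen⟩ := exists_cycle_of_closed_trail CW.length _ le_rfl
          ⟨by
            rw [hCWe]
            exact (by simp [List.nodup_append, hlnd, hxl]; rintro a ha rfl; exact hxl ha : (l ++ [x]).Nodup).map hinj⟩ hne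
        have hg := hgirth _ cyc hcyc
        omega
end

section
/- For every triple of positive integers (a, b, r) there exists a finite set S with two partitions α and β such that every α-class has exactly a elements, every β-class has exactly b elements, each α-class meets each β-class in at most one element, and every simple cycle in the incidence graph of α and β has length greater than 2r. -/
namespace PC

open SimpleGraph

/-- Letters: a generator index together with a sign. -/
abbrev Lam (a b : ℕ) : Type := (Fin a × Fin b) × Bool

/-- Inverse letter. -/
def linv {a b : ℕ} (x : Lam a b) : Lam a b := (x.1, !x.2)

@[simp] lemma linv_linv {a b : ℕ} (x : Lam a b) : linv (linv x) = x := by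
  simp [linv]

/-- Reduced words: no adjacent cancelling pair. -/
def Red {a b : ℕ} (l : List (Lam a b)) : Prop := List.Chain' (fun x y => y ≠ linv x) l

lemma red_nil {a b : ℕ} : Red ([] : List (Lam a b)) := List.isChain_nil

lemma Red.tail' {a b : ℕ} {x : Lam a b} {l : List (Lam a b)} (h : Red (x :: l)) : Red l :=
  (List.isChain_cons.mp h).2

/-- Multiply a reduced word by a letter on the left, with free reduction. -/
def fmul {a b : ℕ} (x : Lam a b) (l : List (Lam a b)) : List (Lam a b) :=
  if l.head? = some (linv x) then l.tail else x :: l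

lemma red_fmul {a b : ℕ} (x : Lam a b) {l : List (Lam a b)} (hl : Red l) : Red (fmul x l) := by
  unfold fmul
  split
  · cases l with
    | nil => exact red_nil
    | cons y t => exact hl.tail'
  · next h =>
    exact List.isChain_cons.mpr ⟨fun y hy => by
      rintro rfl; exact h (by simpa [Option.mem_def] using hy), hl⟩

lemma fmul_fmul {a b : ℕ} (x : Lam a b) {l : List (Lam a b)} (hl : Red l) :
    fmul (linv x) (fmul x l) = l := by
  by_cases h : l.head? = some (linv x)
  · cases l with
    | nil => simp at h
    | cons y t =>
      simp only [List.head?_cons, Option.some.injEq] at h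
      subst h
      have h1 : fmul x (linv x :: t) = t := by
        rw [fmul, if_pos (by simp)]
        rfl
      rw [h1, fmul, if_neg]
      · rw [linv_linv]
        cases t with
        | nil => simp
        | cons z t' =>
          have hz : z ≠ linv (linv x) := (List.isChain_cons_cons.mp hl).1
          rw [linv_linv] at hz
          simpa using hz
  · have h1 : fmul x l = x :: l := by rw [fmul, if_neg h]
    rw [h1, fmul, if_pos (by simp), List.tail_cons]

lemma fmul_linv_fmul {a b : ℕ} (x : Lam a b) {l : List (Lam a b)} (hl : Red l) :
    fmul x (fmul (linv x) l) = l := by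
  have := fmul_fmul (linv x) hl
  rwa [linv_linv] at this

lemma length_fmul_fmul {a b : ℕ} (x : Lam a b) {l : List (Lam a b)} (hl : Red l) :
    (fmul (linv x) (fmul x l)).length = l.length := by rw [fmul_fmul x hl]

/-- The ball of radius `2r` in the free group: reduced words of length at most `2r`. -/
def Ball (a b r : ℕ) : Type := {l : List (Lam a b) // Red l ∧ l.length ≤ 2 * r}

instance (a b r : ℕ) : Finite (Ball a b r) := by
  have h : {l : List (Lam a b) | Red l ∧ l.length ≤ 2 * r}.Finite :=
    (List.finite_length_le (Lam a b) (2 * r)).subset (fun l hl => hl.2)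
  exact h.to_subtype

def nilBall (a b r : ℕ) : Ball a b r := ⟨[], red_nil, by simp⟩

/-- Existence of a permutation of the ball extending left multiplication by a letter
(where defined). -/
lemma exists_perm (a b r : ℕ) (x : Lam a b) :
    ∃ π : Equiv.Perm (Ball a b r), ∀ (w : Ball a b r) (h : (fmul x w.1).length ≤ 2 * r),
      π w = ⟨fmul x w.1, red_fmul x w.2.1, h⟩ := by
  classical
  haveI : Fintype (Ball a b r) := Fintype.ofFinite _
  set D : Ball a b r → Prop := fun w => (fmul x w.1).length ≤ 2 * r with hD
  set D' : Ball a b r → Prop := fun w => (fmul (linv x) w.1).length ≤ 2 * r with hD'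
  let e1 : {w : Ball a b r // D w} ≃ {w : Ball a b r // D' w} :=
  { toFun := fun w => ⟨⟨fmul x w.1.1, red_fmul x w.1.2.1, w.2⟩, by
      show (fmul (linv x) (fmul x w.1.1)).length ≤ 2 * r
      rw [fmul_fmul x w.1.2.1]; exact w.1.2.2⟩
    invFun := fun w => ⟨⟨fmul (linv x) w.1.1, red_fmul _ w.1.2.1, w.2⟩, by
      show (fmul x (fmul (linv x) w.1.1)).length ≤ 2 * r
      rw [fmul_linv_fmul x w.1.2.1]; exact w.1.2.2⟩
    left_inv := fun w => by
      apply Subtype.ext; apply Subtype.ext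
      exact fmul_fmul x w.1.2.1
    right_inv := fun w => by
      apply Subtype.ext; apply Subtype.ext
      exact fmul_linv_fmul x w.1.2.1 }
  have hcard : Fintype.card {w : Ball a b r // ¬ D w} = Fintype.card {w : Ball a b r // ¬ D' w} := by
    rw [Fintype.card_subtype_compl, Fintype.card_subtype_compl, Fintype.card_congr e1]
  have e2 : {w : Ball a b r // ¬ D w} ≃ {w : Ball a b r // ¬ D' w} :=
    Fintype.equivOfCardEq hcard
  refine ⟨Equiv.subtypeCongr e1 e2, ?_⟩
  intro w h
  have : Equiv.subtypeCongr e1 e2 w = ((e1 ⟨w, h⟩ : {w : Ball a b r // D' w}) : Ball a b r) := by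
    unfold Equiv.subtypeCongr
    rw [Equiv.trans_apply, Equiv.trans_apply, Equiv.sumCompl_symm_apply_of_pos (p := D) (a := w) h]
    simp
  rw [this]
  rfl

noncomputable def pt (a b r : ℕ) (t : Fin a × Fin b) : Equiv.Perm (Ball a b r) :=
  (exists_perm a b r (t, true)).choose

lemma pt_spec (a b r : ℕ) (t : Fin a × Fin b) (w : Ball a b r)
    (h : (fmul (t, true) w.1).length ≤ 2 * r) :
    pt a b r t w = ⟨fmul (t, true) w.1, red_fmul _ w.2.1, h⟩ :=
  (exists_perm a b r (t, true)).choose_spec w h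

/-- The permutation associated with a letter. -/
noncomputable def mu (a b r : ℕ) (x : Lam a b) : Equiv.Perm (Ball a b r) :=
  if x.2 then pt a b r x.1 else (pt a b r x.1)⁻¹

lemma mu_linv (a b r : ℕ) (x : Lam a b) : (mu a b r x)⁻¹ = mu a b r (linv x) := by
  rcases x with ⟨t, (_|_)⟩ <;> simp [mu, linv]

/-- Key property: `mu x` prepends `x` to a word, provided the result stays in the ball. -/
lemma mu_cons (a b r : ℕ) (x : Lam a b) (w : Ball a b r)
    (hred : Red (x :: w.1)) (hlen : (x :: w.1).length ≤ 2 * r) :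
    mu a b r x w = ⟨x :: w.1, hred, hlen⟩ := by
  rcases x with ⟨t, s⟩
  cases s
  · -- negative letter : (t, false) = linv (t, true)
    have hx : ((t, false) : Lam a b) = linv (t, true) := rfl
    set w' : Ball a b r := ⟨(t, false) :: w.1, hred, hlen⟩ with hw'
    have hf : fmul ((t, true) : Lam a b) w'.1 = w.1 := by
      rw [fmul, if_pos (by simp [hw', linv])]
      rw [hw']
      rfl
    have hlen2 : (fmul ((t, true) : Lam a b) w'.1).length ≤ 2 * r := by
      rw [hf]; exact w.2.2
    have hspec := pt_spec a b r t w' hlen2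
    have : pt a b r t w' = w := by
      rw [hspec]; apply Subtype.ext; exact hf
    show (pt a b r t)⁻¹ w = w'
    rw [← this]; exact (pt a b r t).symm_apply_apply w'
  · -- positive letter
    have hf : fmul ((t, true) : Lam a b) w.1 = (t, true) :: w.1 := by
      rw [fmul, if_neg]
      intro hc
      rcases w with ⟨l, hl, hll⟩
      cases l with
      | nil => simp at hc
      | cons y u =>
        simp only [List.head?_cons, Option.some.injEq] at hc
        have := (List.isChain_cons_cons.mp hred).1
        exact this (by rw [hc])
    have hlen2 : (fmul ((t, true) : Lam a b) w.1).length ≤ 2 * r := by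
      rw [hf]; exact hlen
    show pt a b r t w = _
    rw [pt_spec a b r t w hlen2]
    apply Subtype.ext
    exact hf

/-- Evaluating the product of a reduced word at the empty word gives back the word. -/
lemma prod_apply (a b r : ℕ) :
    ∀ (l : List (Lam a b)) (hred : Red l) (hlen : l.length ≤ 2 * r),
      (l.map (mu a b r)).prod (nilBall a b r) = ⟨l, hred, hlen⟩ := by
  intro l
  induction l with
  | nil => intro _ _; rfl
  | cons x u ih =>
    intro hred hlen
    rw [List.map_cons, List.prod_cons, Equiv.Perm.mul_apply,
      ih hred.tail' (by simpa using Nat.le_of_succ_le hlen)]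
    exact mu_cons a b r x ⟨u, hred.tail', by simpa using Nat.le_of_succ_le hlen⟩ hred hlen


section Graph

variable (a b r : ℕ)

abbrev GG (a b r : ℕ) := Equiv.Perm (Ball a b r)

noncomputable def cA : GG a b r × Fin a × Fin b → GG a b r × Fin b := fun s => (s.1, s.2.2)

noncomputable def cB : GG a b r × Fin a × Fin b → GG a b r × Fin a :=
  fun s => (s.1 * pt a b r s.2, s.2.1)

abbrev V (a b r : ℕ) := (GG a b r × Fin b) ⊕ (GG a b r × Fin a)

def phi : V a b r → GG a b r := Sum.elim Prod.fst Prod.fst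

lemma adj_cases {u w : V a b r} (h : (incGraph (cA a b r) (cB a b r)).Adj u w) :
    (∃ g i j, u = Sum.inl (g, j) ∧ w = Sum.inr (g * pt a b r (i, j), i)) ∨
    (∃ g i j, w = Sum.inl (g, j) ∧ u = Sum.inr (g * pt a b r (i, j), i)) := by
  obtain ⟨s, ⟨h1, h2⟩ | ⟨h1, h2⟩⟩ := h
  · exact Or.inl ⟨s.1, s.2.1, s.2.2, by simpa [cA] using h1, by simpa [cB] using h2⟩
  · exact Or.inr ⟨s.1, s.2.1, s.2.2, by simpa [cA] using h2, by simpa [cB] using h1⟩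

def lab (i0 : Fin a) (j0 : Fin b) : V a b r → V a b r → Lam a b
  | Sum.inl p, Sum.inr q => ((q.2, p.2), true)
  | Sum.inr q, Sum.inl p => ((q.2, p.2), false)
  | _, _ => ((i0, j0), true)

noncomputable def wrd (i0 : Fin a) (j0 : Fin b) {u v : V a b r}
    (p : (incGraph (cA a b r) (cB a b r)).Walk u v) : List (Lam a b) :=
  p.darts.map (fun d => lab a b r i0 j0 d.toProd.1 d.toProd.2)

@[simp] lemma wrd_nil (i0 : Fin a) (j0 : Fin b) {u : V a b r} :
    wrd a b r i0 j0 (SimpleGraph.Walk.nil : (incGraph (cA a b r) (cB a b r)).Walk u u) = [] := by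
  simp [wrd]

@[simp] lemma wrd_cons (i0 : Fin a) (j0 : Fin b) {u m v : V a b r}
    (h : (incGraph (cA a b r) (cB a b r)).Adj u m)
    (p : (incGraph (cA a b r) (cB a b r)).Walk m v) :
    wrd a b r i0 j0 (SimpleGraph.Walk.cons h p) = lab a b r i0 j0 u m :: wrd a b r i0 j0 p := by
  simp [wrd, SimpleGraph.Walk.darts_cons]

lemma length_wrd (i0 : Fin a) (j0 : Fin b) {u v : V a b r}
    (p : (incGraph (cA a b r) (cB a b r)).Walk u v) :
    (wrd a b r i0 j0 p).length = p.length := by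
  simp [wrd, SimpleGraph.Walk.length_darts]

lemma phi_step (i0 : Fin a) (j0 : Fin b) {u w : V a b r}
    (h : (incGraph (cA a b r) (cB a b r)).Adj u w) :
    phi a b r w = phi a b r u * mu a b r (lab a b r i0 j0 u w) := by
  rcases adj_cases a b r h with ⟨g, i, j, rfl, rfl⟩ | ⟨g, i, j, rfl, rfl⟩
  · simp [phi, lab, mu]
  · simp [phi, lab, mu]

lemma phi_eval (i0 : Fin a) (j0 : Fin b) {u v : V a b r}
    (p : (incGraph (cA a b r) (cB a b r)).Walk u v) :
    phi a b r v = phi a b r u * ((wrd a b r i0 j0 p).map (mu a b r)).prod := by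
  induction p with
  | nil => simp
  | cons h q ih =>
    rw [wrd_cons, List.map_cons, List.prod_cons, ← mul_assoc, ← phi_step a b r i0 j0 h]
    exact ih

lemma lab_eq_linv (i0 : Fin a) (j0 : Fin b) {u w z : V a b r}
    (h1 : (incGraph (cA a b r) (cB a b r)).Adj u w)
    (h2 : (incGraph (cA a b r) (cB a b r)).Adj w z)
    (he : lab a b r i0 j0 w z = linv (lab a b r i0 j0 u w)) : u = z := by
  rcases adj_cases a b r h1 with ⟨g, i, j, rfl, hw⟩ | ⟨g, i, j, hw, rfl⟩ <;>
    rcases adj_cases a b r h2 with ⟨g', i', j', hw', rfl⟩ | ⟨g', i', j', rfl, hw'⟩ <;>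
      subst hw
  · simp at hw'
  · -- u = inl (g, j), w = inr (g * pt (i,j), i), z = inl (g', j')
    obtain ⟨hg, hi⟩ : g' * pt a b r (i', j') = g * pt a b r (i, j) ∧ i' = i := by
      have := hw'
      simp only [Sum.inr.injEq, Prod.mk.injEq] at this
      exact ⟨this.1.symm, this.2.symm⟩
    subst hi
    simp only [lab, linv, Prod.mk.injEq] at he
    obtain ⟨⟨-, hj⟩, -⟩ := he
    subst hj
    have : g' = g := mul_right_cancel hg
    subst this
    rfl
  · -- u = inr (g * pt (i,j), i), w = inl (g, j), z = inr (g' * pt (i',j'), i')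
    obtain ⟨hg, hj⟩ : g' = g ∧ j' = j := by
      have := hw'
      simp only [Sum.inl.injEq, Prod.mk.injEq] at this
      exact ⟨this.1.symm, this.2.symm⟩
    subst hg; subst hj
    simp only [lab, linv, Prod.mk.injEq] at he
    obtain ⟨⟨hi, -⟩, -⟩ := he
    subst hi
    rfl
  · simp at hw'

lemma red_wrd (i0 : Fin a) (j0 : Fin b) {u v : V a b r}
    (p : (incGraph (cA a b r) (cB a b r)).Walk u v) (hp : p.IsPath) :
    Red (wrd a b r i0 j0 p) := by
  induction p with
  | nil => exact red_nil
  | cons h q ih =>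
    cases q with
    | nil => rw [wrd_cons, wrd_nil]; exact List.isChain_singleton _
    | cons h2 q' =>
      rw [wrd_cons, wrd_cons]
      rw [wrd_cons] at ih
      refine List.isChain_cons_cons.mpr ⟨?_, ih hp.of_cons⟩
      intro he
      have huz := lab_eq_linv a b r i0 j0 h h2 he
      have hnd := hp.support_nodup
      rw [SimpleGraph.Walk.support_cons, SimpleGraph.Walk.support_cons] at hnd
      refine (List.nodup_cons.mp hnd).1 ?_
      rw [huz]
      exact List.mem_cons_of_mem _ q'.start_mem_support

end Graph

end PC

/-- For all positive integers `a`, `b`, `r` there is a finite set `S` with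
partitions `α`, `β` (class maps `cα`, `cβ`) such that every `α`-class has `a` elements, every
`β`-class has `b` elements, an `α`-class meets a `β`-class in at most one element, and every
simple cycle of the incidence graph is longer than `2r`. -/
theorem partition_construction (a b r : ℕ) (ha : 0 < a) (hb : 0 < b) (hr : 0 < r) :
    ∃ (S A B : Type) (_ : Fintype S) (cα : S → A) (cβ : S → B),
      (∀ x : A, {s : S | cα s = x}.ncard = a) ∧
      (∀ y : B, {s : S | cβ s = y}.ncard = b) ∧
      (∀ x y : S, cα x = cα y → cβ x = cβ y → x = y) ∧
      (∀ (v : A ⊕ B) (c : (incGraph cα cβ).Walk v v), c.IsCycle → 2 * r < c.length) := by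
  classical
  obtain ⟨i0⟩ : Nonempty (Fin a) := ⟨⟨0, ha⟩⟩
  obtain ⟨j0⟩ : Nonempty (Fin b) := ⟨⟨0, hb⟩⟩
  refine ⟨PC.GG a b r × Fin a × Fin b, PC.GG a b r × Fin b, PC.GG a b r × Fin a,
    Fintype.ofFinite _, PC.cA a b r, PC.cB a b r, ?_, ?_, ?_, ?_⟩
  · -- α-classes have `a` elements
    intro x
    have hset : {s | PC.cA a b r s = x} = Set.range (fun i : Fin a => (x.1, (i, x.2))) := by
      ext s
      simp only [Set.mem_setOf_eq, Set.mem_range, PC.cA]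
      constructor
      · intro h
        refine ⟨s.2.1, ?_⟩
        have h1 : s.1 = x.1 := congrArg Prod.fst h
        have h2 : s.2.2 = x.2 := congrArg Prod.snd h
        rw [← h1, ← h2]
      · rintro ⟨i, rfl⟩; rfl
    rw [hset, ← Set.image_univ,
      Set.ncard_image_of_injective _ (fun i1 i2 h => by
        simpa using congrArg (fun p => p.2.1) h),
      Set.ncard_univ, Nat.card_eq_fintype_card, Fintype.card_fin]
  · -- β-classes have `b` elements
    intro y
    have hset : {s | PC.cB a b r s = y} =
        Set.range (fun j : Fin b => (y.1 * (PC.pt a b r (y.2, j))⁻¹, (y.2, j))) := by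
      ext s
      simp only [Set.mem_setOf_eq, Set.mem_range, PC.cB]
      constructor
      · intro h
        refine ⟨s.2.2, ?_⟩
        have h1 : s.1 * PC.pt a b r s.2 = y.1 := congrArg Prod.fst h
        have h2 : s.2.1 = y.2 := congrArg Prod.snd h
        have hs2 : (y.2, s.2.2) = s.2 := by rw [← h2]
        rw [hs2, ← h1, mul_inv_cancel_right]
      · rintro ⟨j, rfl⟩
        simp
    rw [hset, ← Set.image_univ,
      Set.ncard_image_of_injective _ (fun j1 j2 h => by
        simpa using congrArg (fun p => p.2.2) h),
      Set.ncard_univ, Nat.card_eq_fintype_card, Fintype.card_fin]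
  · -- classes meet in at most one element
    rintro ⟨g, i, j⟩ ⟨g', i', j'⟩ h1 h2
    simp only [PC.cA, PC.cB, Prod.mk.injEq] at h1 h2
    obtain ⟨rfl, rfl⟩ := h1
    obtain ⟨-, rfl⟩ := h2
    rfl
  · -- no short cycles
    intro v c hc
    by_contra hlen
    push_neg at hlen
    have h3 := hc.three_le_length
    cases c with
    | nil => simp at h3
    | cons hadj p =>
      rename_i m
      obtain ⟨hp, -⟩ := (SimpleGraph.Walk.cons_isCycle_iff p hadj).mp hc
      have hev := PC.phi_eval a b r i0 j0 (SimpleGraph.Walk.cons hadj p)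
      have hprod := left_eq_mul.mp hev
      rw [PC.wrd_cons, List.map_cons, List.prod_cons] at hprod
      have hP : ((PC.wrd a b r i0 j0 p).map (PC.mu a b r)).prod
          = PC.mu a b r (PC.linv (PC.lab a b r i0 j0 v m)) := by
        rw [← PC.mu_linv]
        exact eq_inv_of_mul_eq_one_right hprod
      rw [SimpleGraph.Walk.length_cons] at hlen h3
      have hlp : (PC.wrd a b r i0 j0 p).length ≤ 2 * r := by
        rw [PC.length_wrd]; omega
      have h1 := PC.prod_apply a b r (PC.wrd a b r i0 j0 p) (PC.red_wrd a b r i0 j0 p hp) hlp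
      have h2 := PC.mu_cons a b r (PC.linv (PC.lab a b r i0 j0 v m)) (PC.nilBall a b r)
        (List.isChain_singleton _) (by simp [PC.nilBall]; omega)
      have hnil := congrArg (fun σ : Equiv.Perm (PC.Ball a b r) => σ (PC.nilBall a b r)) hP
      rw [h1, h2] at hnil
      have hw : PC.wrd a b r i0 j0 p = [PC.linv (PC.lab a b r i0 j0 v m)] :=
        congrArg Subtype.val hnil
      have hl1 : p.length = 1 := by
        rw [← PC.length_wrd a b r i0 j0 p, hw]
        rfl
      omega
end
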